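/- Let C be a cartesian category, G an internal group in C, and X an object of C. Then the category [G × X, C/X] of (G × X)-objects in the slice category C/X (where G × X carries the internal group structure in C/X induced by G) is isomorphic to the slice category [G, C]/G*(X). -/

import Mathlib

open CategoryTheory CategoryTheory.Limits

universe v u v₂ u₂ v₃ u₃

noncomputable section

namespace PrincipalBundles

variable {C : Type u} [Category.{v} C] [HasFiniteLimits C]

attribute [local simp] prod.lift_fst prod.lift_snd prod.lift_fst_assoc prod.lift_snd_assoc

/-- An internal group in a cartesian category `C`: an object `G` with multiplication
`m : G ⨯ G ⟶ G`, unit `e : 1 ⟶ G` and inverse `i : G ⟶ G` satisfying the group axioms. -/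
structure InternalGroup (C : Type u) [Category.{v} C] [HasFiniteLimits C] where
  G : C
  m : G ⨯ G ⟶ G
  e : ⊤_ C ⟶ G
  i : G ⟶ G
  mul_assoc' : (prod.associator G G G).inv ≫ prod.map m (𝟙 G) ≫ m = prod.map (𝟙 G) m ≫ m
  one_mul' : prod.lift (terminal.from G ≫ e) (𝟙 G) ≫ m = 𝟙 G
  mul_one' : prod.lift (𝟙 G) (terminal.from G ≫ e) ≫ m = 𝟙 G
  inv_mul' : prod.lift i (𝟙 G) ≫ m = terminal.from G ≫ e
  mul_inv' : prod.lift (𝟙 G) i ≫ m = terminal.from G ≫ e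

namespace InternalGroup

variable (Gr : InternalGroup C)

/-- Multiplication of generalized elements. -/
theorem one_mul_elt {T : C} (b : T ⟶ Gr.G) :
    prod.lift (terminal.from T ≫ Gr.e) b ≫ Gr.m = b := by
  have h : prod.lift (terminal.from T ≫ Gr.e) b
      = b ≫ prod.lift (terminal.from Gr.G ≫ Gr.e) (𝟙 Gr.G) := by
    rw [prod.comp_lift, ← Category.assoc, terminal.comp_from, Category.comp_id]
  rw [h, Category.assoc, Gr.one_mul', Category.comp_id]

theorem mul_one_elt {T : C} (a : T ⟶ Gr.G) :
    prod.lift a (terminal.from T ≫ Gr.e) ≫ Gr.m = a := by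
  have h : prod.lift a (terminal.from T ≫ Gr.e)
      = a ≫ prod.lift (𝟙 Gr.G) (terminal.from Gr.G ≫ Gr.e) := by
    rw [prod.comp_lift, ← Category.assoc, terminal.comp_from, Category.comp_id]
  rw [h, Category.assoc, Gr.mul_one', Category.comp_id]

theorem mul_assoc_elt {T : C} (a b c : T ⟶ Gr.G) :
    prod.lift (prod.lift a b ≫ Gr.m) c ≫ Gr.m = prod.lift a (prod.lift b c ≫ Gr.m) ≫ Gr.m := by
  have h1 : prod.lift (prod.lift a b ≫ Gr.m) c
      = prod.lift (prod.lift a b) c ≫ prod.map Gr.m (𝟙 _) := by simp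
  have h2 : prod.lift (prod.lift a b) c
      = prod.lift a (prod.lift b c) ≫ (prod.associator Gr.G Gr.G Gr.G).inv := by
    ext <;> simp
  have h3 : prod.lift a (prod.lift b c ≫ Gr.m)
      = prod.lift a (prod.lift b c) ≫ prod.map (𝟙 _) Gr.m := by simp
  rw [h1, h2, h3, Category.assoc, Category.assoc, Gr.mul_assoc', ← Category.assoc]

theorem inv_mul_elt {T : C} (a : T ⟶ Gr.G) :
    prod.lift (a ≫ Gr.i) a ≫ Gr.m = terminal.from T ≫ Gr.e := by
  have h : prod.lift (a ≫ Gr.i) a = a ≫ prod.lift Gr.i (𝟙 Gr.G) := by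
    rw [prod.comp_lift, Category.comp_id]
  rw [h, Category.assoc, Gr.inv_mul', ← Category.assoc, terminal.comp_from]

theorem mul_inv_elt {T : C} (a : T ⟶ Gr.G) :
    prod.lift a (a ≫ Gr.i) ≫ Gr.m = terminal.from T ≫ Gr.e := by
  have h : prod.lift a (a ≫ Gr.i) = a ≫ prod.lift (𝟙 Gr.G) Gr.i := by
    rw [prod.comp_lift, Category.comp_id]
  rw [h, Category.assoc, Gr.mul_inv', ← Category.assoc, terminal.comp_from]

/-- The monad `X ↦ G ⨯ X` on `C` associated to an internal group `G`; its unit at `X` is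
`(e ∘ !, id) : X ⟶ G ⨯ X` and its multiplication at `X` is `m ⨯ id : G ⨯ (G ⨯ X) ⟶ G ⨯ X`. -/
def actionMonad : Monad C where
  toFunctor := prod.functor.obj Gr.G
  η :=
    { app := fun X => prod.lift (terminal.from X ≫ Gr.e) (𝟙 X)
      naturality := by
        intro X Y f
        dsimp [prod.functor]
        ext
        · simp [← Category.assoc, terminal.comp_from]
        · simp }
  μ :=
    { app := fun X => (prod.associator Gr.G Gr.G X).inv ≫ prod.map Gr.m (𝟙 X)
      naturality := by
        intro X Y f
        dsimp [prod.functor]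
        ext
        · simp [prod.comp_lift_assoc]
        · simp }
  assoc := by
    intro X
    dsimp [prod.functor]
    ext
    · simp only [prod.comp_lift_assoc, Category.assoc, prod.map_fst, prod.map_snd,
        prod.lift_fst, prod.lift_snd, Category.comp_id, Category.id_comp,
        prod.associator_inv, prod.lift_fst_assoc, prod.comp_lift, prod.map_fst_assoc,
        prod.map_snd_assoc, prod.lift_snd_assoc]
      exact (Gr.mul_assoc_elt _ _ _).symm
    · simp
  left_unit := by
    intro X
    dsimp [prod.functor]
    ext
    · simp [prod.comp_lift_assoc, Gr.one_mul_elt]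
    · simp
  right_unit := by
    intro X
    dsimp [prod.functor]
    ext
    · simp only [prod.comp_lift_assoc, Category.assoc, prod.map_fst, prod.map_snd,
        prod.lift_fst, prod.lift_snd, Category.comp_id, Category.id_comp,
        prod.associator_inv, prod.lift_fst_assoc]
      simp only [prod.map_snd_assoc, prod.lift_fst_assoc, Category.assoc, prod.lift_fst]
      rw [← Category.assoc prod.snd, terminal.comp_from]
      exact Gr.mul_one_elt prod.fst
    · simp

/-- The category `[G, C]` of `G`-objects and `G`-homomorphisms: objects of `C` equipped with
a `G`-action `a : G ⨯ A ⟶ A` satisfying the unit and associativity laws, with morphisms the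
morphisms of `C` commuting with the actions.  (Implemented as the Eilenberg–Moore category of
the monad `G ⨯ (-)`; the algebra axioms are literally the action axioms, and algebra morphisms
are literally the `G`-homomorphisms.) -/
abbrev GObject := (actionMonad Gr).Algebra

instance : HasFiniteLimits (GObject Gr) :=
  ⟨fun _ _ _ => ⟨fun D => Monad.hasLimit_of_comp_forget_hasLimit D⟩⟩

variable {Gr}

/-- The action of a `G`-object, seen as a morphism `G ⨯ A ⟶ A` in `C`. -/
def act (A : GObject Gr) : Gr.G ⨯ A.A ⟶ A.A := A.a

/-- Elementwise unit law for an action. -/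
theorem act_one_elt (A : GObject Gr) {T : C} (y : T ⟶ A.A) :
    prod.lift (terminal.from T ≫ Gr.e) y ≫ act A = y := by
  have h : prod.lift (terminal.from T ≫ Gr.e) y
      = y ≫ prod.lift (terminal.from A.A ≫ Gr.e) (𝟙 A.A) := by
    rw [prod.comp_lift, ← Category.assoc, terminal.comp_from, Category.comp_id]
  have hu := A.unit
  dsimp [actionMonad] at hu
  rw [h, Category.assoc, act]
  erw [hu]
  rw [Category.comp_id]

/-- Elementwise associativity law for an action. -/
theorem act_assoc_elt (A : GObject Gr) {T : C} (a b : T ⟶ Gr.G) (y : T ⟶ A.A) :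
    prod.lift (prod.lift a b ≫ Gr.m) y ≫ act A
      = prod.lift a (prod.lift b y ≫ act A) ≫ act A := by
  have ha : (prod.associator Gr.G Gr.G A.A).inv ≫ prod.map Gr.m (𝟙 A.A) ≫ A.a
      = prod.map (𝟙 Gr.G) A.a ≫ A.a := by
    have ha0 := A.assoc
    dsimp [actionMonad, prod.functor] at ha0
    simp only [Category.assoc] at ha0
    exact ha0
  have h1 : prod.lift (prod.lift a b ≫ Gr.m) y
      = prod.lift (prod.lift a b) y ≫ prod.map Gr.m (𝟙 _) := by simp
  have h2 : prod.lift (prod.lift a b) y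
      = prod.lift a (prod.lift b y) ≫ (prod.associator Gr.G Gr.G A.A).inv := by
    ext <;> simp
  have h3 : prod.lift a (prod.lift b y ≫ act A)
      = prod.lift a (prod.lift b y) ≫ prod.map (𝟙 _) (act A) := by simp
  rw [h1, h2, h3, Category.assoc, Category.assoc, act, ha]
  exact (Category.assoc _ _ _).symm

variable (Gr)

/-- The functor `G* : C ⥤ [G, C]` equipping an object with the trivial action `π₂`. -/
def trivAction : C ⥤ GObject Gr where
  obj X :=
    { A := X
      a := prod.snd
      unit := by simp [actionMonad]; exact prod.lift_snd _ _
      assoc := by simp [actionMonad, prod.functor] }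
  map f :=
    { f := f
      h := by simp [actionMonad, prod.functor] }
  map_id X := by ext; rfl
  map_comp f g := by ext; rfl

/-- The `G`-object `(G, m)`: `G` acting on itself by multiplication. -/
def selfAction : GObject Gr where
  A := Gr.G
  a := Gr.m
  unit := Gr.one_mul'
  assoc := by
    have h := Gr.mul_assoc'
    dsimp [actionMonad, prod.functor]
    simpa [Category.assoc] using h

/-- The product of two `G`-objects: the product in `C` with the componentwise action. -/
def prodGObject (A B : GObject Gr) : GObject Gr where
  A := A.A ⨯ B.A
  a := prod.lift (prod.map (𝟙 Gr.G) prod.fst ≫ act A) (prod.map (𝟙 Gr.G) prod.snd ≫ act B)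
  unit := by
    dsimp [actionMonad]
    show prod.lift (terminal.from (A.A ⨯ B.A) ≫ Gr.e) (𝟙 (A.A ⨯ B.A)) ≫
      prod.lift (prod.map (𝟙 Gr.G) prod.fst ≫ act A) (prod.map (𝟙 Gr.G) prod.snd ≫ act B) =
        𝟙 (A.A ⨯ B.A)
    apply Limits.prod.hom_ext
    · simp only [Category.assoc, prod.lift_fst, prod.lift_map_assoc, Category.comp_id,
        Category.id_comp]
      exact act_one_elt A prod.fst
    · simp only [Category.assoc, prod.lift_snd, prod.lift_map_assoc, Category.comp_id,
        Category.id_comp]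
      exact act_one_elt B prod.snd
  assoc := by
    dsimp [actionMonad, prod.functor]
    apply Limits.prod.hom_ext
    · simp only [prod.comp_lift_assoc, Category.assoc, prod.map_fst, prod.map_snd,
        prod.lift_fst, prod.lift_snd, Category.comp_id, Category.id_comp,
        prod.associator_inv, prod.lift_fst_assoc, prod.comp_lift, prod.map_fst_assoc,
        prod.map_snd_assoc, prod.lift_snd_assoc, prod.map_map_assoc, prod.map_map]
      rw [prod.lift_map_assoc]
      have hR : prod.map (𝟙 Gr.G) (prod.map (𝟙 Gr.G) (prod.fst : A.A ⨯ B.A ⟶ A.A) ≫ act A) ≫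
              act A
          = prod.lift (prod.fst : Gr.G ⨯ (Gr.G ⨯ (A.A ⨯ B.A)) ⟶ Gr.G)
              (prod.lift ((prod.snd : Gr.G ⨯ (Gr.G ⨯ (A.A ⨯ B.A)) ⟶ Gr.G ⨯ (A.A ⨯ B.A)) ≫
                  prod.fst)
                ((prod.snd ≫ prod.snd) ≫ prod.fst) ≫ act A) ≫
            act A := by
        congr 1
        apply Limits.prod.hom_ext
        · simp
        · simp only [prod.map_snd, prod.lift_snd]
          rw [← Category.assoc]
          congr 1
          apply Limits.prod.hom_ext <;> simp
      rw [hR]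
      exact act_assoc_elt A prod.fst (prod.snd ≫ prod.fst) ((prod.snd ≫ prod.snd) ≫ prod.fst)
    · simp only [prod.comp_lift_assoc, Category.assoc, prod.map_fst, prod.map_snd,
        prod.lift_fst, prod.lift_snd, Category.comp_id, Category.id_comp,
        prod.associator_inv, prod.lift_fst_assoc, prod.comp_lift, prod.map_fst_assoc,
        prod.map_snd_assoc, prod.lift_snd_assoc, prod.map_map_assoc, prod.map_map]
      rw [prod.lift_map_assoc]
      have hR : prod.map (𝟙 Gr.G) (prod.map (𝟙 Gr.G) (prod.snd : A.A ⨯ B.A ⟶ B.A) ≫ act B) ≫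
              act B
          = prod.lift (prod.fst : Gr.G ⨯ (Gr.G ⨯ (A.A ⨯ B.A)) ⟶ Gr.G)
              (prod.lift ((prod.snd : Gr.G ⨯ (Gr.G ⨯ (A.A ⨯ B.A)) ⟶ Gr.G ⨯ (A.A ⨯ B.A)) ≫
                  prod.fst)
                ((prod.snd ≫ prod.snd) ≫ prod.snd) ≫ act B) ≫
            act B := by
        congr 1
        apply Limits.prod.hom_ext
        · simp
        · simp only [prod.map_snd, prod.lift_snd]
          rw [← Category.assoc]
          congr 1
          apply Limits.prod.hom_ext <;> simp
      rw [hR]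
      exact act_assoc_elt B prod.fst (prod.snd ≫ prod.fst) ((prod.snd ≫ prod.snd) ≫ prod.snd)

variable {Gr}

/-- First projection of the product of `G`-objects. -/
def prodGFst (A B : GObject Gr) : prodGObject Gr A B ⟶ A where
  f := prod.fst
  h := by simp [prodGObject, actionMonad, prod.functor, act]

/-- Second projection of the product of `G`-objects. -/
def prodGSnd (A B : GObject Gr) : prodGObject Gr A B ⟶ B where
  f := prod.snd
  h := by simp [prodGObject, actionMonad, prod.functor, act]

/-- Functoriality of the product of `G`-objects. -/
def prodGHom {A A' B B' : GObject Gr} (u : A ⟶ A') (v : B ⟶ B') :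
    prodGObject Gr A B ⟶ prodGObject Gr A' B' where
  f := prod.map u.f v.f
  h := by
    have hu : prod.map (𝟙 Gr.G) u.f ≫ act A' = act A ≫ u.f := by
      have h0 := u.h; dsimp [actionMonad, prod.functor] at h0; exact h0
    have hv : prod.map (𝟙 Gr.G) v.f ≫ act B' = act B ≫ v.f := by
      have h0 := v.h; dsimp [actionMonad, prod.functor] at h0; exact h0
    dsimp [prodGObject, actionMonad, prod.functor]
    apply Limits.prod.hom_ext
    · simp only [Category.assoc, prod.lift_fst, prod.map_fst, prod.lift_fst_assoc]
      rw [← Category.assoc, prod.map_map, Category.id_comp, prod.map_fst]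
      rw [show prod.map (𝟙 Gr.G) (prod.fst ≫ u.f)
            = prod.map (𝟙 Gr.G) prod.fst ≫ prod.map (𝟙 Gr.G) u.f by
          rw [prod.map_map, Category.comp_id]]
      rw [Category.assoc, hu]
    · simp only [Category.assoc, prod.lift_snd, prod.map_snd, prod.lift_snd_assoc]
      rw [← Category.assoc, prod.map_map, Category.id_comp, prod.map_snd]
      rw [show prod.map (𝟙 Gr.G) (prod.snd ≫ v.f)
            = prod.map (𝟙 Gr.G) prod.snd ≫ prod.map (𝟙 Gr.G) v.f by
          rw [prod.map_map, Category.comp_id]]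
      rw [Category.assoc, hv]

variable (Gr)

/-- The functor `(P, p) ⨯ (-) : [G, C] ⥤ [G, C]`. -/
def prodGFunctor (P : GObject Gr) : GObject Gr ⥤ GObject Gr where
  obj A := prodGObject Gr P A
  map h := prodGHom (𝟙 P) h
  map_id A := by
    apply Monad.Algebra.Hom.ext
    show prod.map (𝟙 P : P ⟶ P).f (𝟙 A : A ⟶ A).f = (𝟙 (prodGObject Gr P A) : _ ⟶ _).f
    rw [Monad.Algebra.id_f, Monad.Algebra.id_f, Monad.Algebra.id_f, prod.map_id_id]
    rfl
  map_comp f g := by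
    apply Monad.Algebra.Hom.ext
    show prod.map (𝟙 P : P ⟶ P).f (f ≫ g).f = (prodGHom (𝟙 P) f ≫ prodGHom (𝟙 P) g).f
    rw [Monad.Algebra.comp_f, Monad.Algebra.comp_f]
    show prod.map (𝟙 P : P ⟶ P).f (f.f ≫ g.f)
        = prod.map (𝟙 P : P ⟶ P).f f.f ≫ prod.map (𝟙 P : P ⟶ P).f g.f
    rw [prod.map_map]
    rw [Monad.Algebra.id_f, Category.comp_id]

end InternalGroup

open InternalGroup

section Frobenius

variable {D : Type u₂} [Category.{v₂} D] [HasFiniteLimits D]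
variable {E : Type u₃} [Category.{v₃} E] [HasFiniteLimits E]

/-- The canonical Frobenius map `L(R X ⨯ W) ⟶ X ⨯ L W` of an adjunction `L ⊣ R`, namely
`(L π₁, L π₂)` followed by `ε_X ⨯ id` where `ε` is the counit. -/
def frobMap {L : D ⥤ E} {R : E ⥤ D} (adj : L ⊣ R) (W : D) (X : E) :
    L.obj (R.obj X ⨯ W) ⟶ X ⨯ L.obj W :=
  prod.lift (L.map prod.fst ≫ adj.counit.app X) (L.map prod.snd)

/-- An adjunction `L ⊣ R` between cartesian categories satisfies Frobenius reciprocity if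
all the canonical maps `L(R X ⨯ W) ⟶ X ⨯ L W` are isomorphisms. -/
def IsFrobenius {L : D ⥤ E} {R : E ⥤ D} (adj : L ⊣ R) : Prop :=
  ∀ (W : D) (X : E), IsIso (frobMap adj W X)

/-- The left adjoint of the adjunction `L ⊣ R` sliced at `X`, sending `g : W ⟶ R X`
to its adjoint transpose `L W ⟶ X`. -/
def slicedL {L : D ⥤ E} {R : E ⥤ D} (adj : L ⊣ R) (X : E) : Over (R.obj X) ⥤ Over X where
  obj W := Over.mk (L.map W.hom ≫ adj.counit.app X)
  map {W W'} u :=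
    Over.homMk (L.map u.left) (by
      dsimp
      rw [← Category.assoc, ← L.map_comp, Over.w u])
  map_id W := by ext; dsimp; simp
  map_comp f g := by ext; dsimp; simp

/-- The right adjoint of the adjunction `L ⊣ R` sliced at `X`, sending `f : Y ⟶ X` to
`R f : R Y ⟶ R X`. -/
def slicedR {L : D ⥤ E} {R : E ⥤ D} (adj : L ⊣ R) (X : E) : Over X ⥤ Over (R.obj X) where
  obj Y := Over.mk (R.map Y.hom)
  map {Y Y'} u :=
    Over.homMk (R.map u.left) (by
      dsimp
      rw [← R.map_comp, Over.w u])
  map_id Y := by ext; dsimp; simp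
  map_comp f g := by ext; dsimp; simp

/-- The sliced adjunction `L_X ⊣ R_X : D / R X ⇄ E / X` of `L ⊣ R` at an object `X`. -/
def slicedAdj {L : D ⥤ E} {R : E ⥤ D} (adj : L ⊣ R) (X : E) : slicedL adj X ⊣ slicedR adj X :=
  Adjunction.mkOfHomEquiv
    { homEquiv := fun W Y =>
        { toFun := fun u => Over.homMk ((adj.homEquiv _ _) u.left) (by
            have hu := Over.w u
            dsimp [slicedL] at hu
            dsimp [slicedR]
            erw [Adjunction.homEquiv_unit, Category.assoc, ← R.map_comp, hu, R.map_comp,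
              adj.unit_naturality_assoc, adj.right_triangle_components, Category.comp_id])
          invFun := fun v => Over.homMk ((adj.homEquiv _ _).symm v.left) (by
            have hv := Over.w v
            dsimp [slicedR] at hv
            dsimp [slicedL]
            erw [Adjunction.homEquiv_counit, Category.assoc, ← adj.counit_naturality,
              ← Category.assoc, ← L.map_comp, hv])
          left_inv := fun u => by ext; dsimp; exact Equiv.symm_apply_apply _ _
          right_inv := fun v => by ext; dsimp; exact Equiv.apply_symm_apply _ _ }
      homEquiv_naturality_left_symm := by
        intro W' W Y f g
        ext
        dsimp [slicedL]
        exact adj.homEquiv_naturality_left_symm _ _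
      homEquiv_naturality_right := by
        intro W Y Y' f g
        ext
        dsimp [slicedR]
        exact adj.homEquiv_naturality_right _ _ }

/-- An adjunction between cartesian categories is stably Frobenius if every sliced
adjunction satisfies Frobenius reciprocity. -/
def IsStablyFrobenius {L : D ⥤ E} {R : E ⥤ D} (adj : L ⊣ R) : Prop :=
  ∀ X : E, IsFrobenius (slicedAdj adj X)

end Frobenius

/-- A morphism `f : X ⟶ Y` is an effective descent morphism if the pullback functor
`f* : C/Y ⥤ C/X` is monadic. -/
def EffectiveDescentMorphism {X Y : C} (f : X ⟶ Y) : Prop :=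
  Nonempty (MonadicRightAdjoint (Over.pullback f))

/-- A principal `G`-bundle: a `G`-object `(P, p)` such that `! : P ⟶ 1` is an effective
descent morphism and `(p, π₂) : G ⨯ P ⟶ P ⨯ P` is an isomorphism. -/
def IsPrincipal (Gr : InternalGroup C) (P : InternalGroup.GObject Gr) : Prop :=
  EffectiveDescentMorphism (terminal.from P.A) ∧
    IsIso (prod.lift (InternalGroup.act P) prod.snd)

/-- The functor `C ⥤ C/P` sending `X` to the projection `P ⨯ X ⟶ P`. -/
def projFunctor (P : C) : C ⥤ Over P where
  obj X := Over.mk (prod.fst : P ⨯ X ⟶ P)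
  map {X Y} f := Over.homMk (prod.map (𝟙 P) f) (by simp)
  map_id X := by ext; dsimp; simp
  map_comp f g := by ext; dsimp; simp

theorem cofork_condition (Gr : InternalGroup C) (P : InternalGroup.GObject Gr) (X : C) :
    ((prod.associator Gr.G P.A X).inv ≫ prod.map (InternalGroup.act P) (𝟙 X)) ≫
        (prod.snd : P.A ⨯ X ⟶ X)
      = (prod.snd : Gr.G ⨯ (P.A ⨯ X) ⟶ P.A ⨯ X) ≫ prod.snd := by
  simp

/-- The object `G ⨯ X` of `C/X` underlying the internal group induced by `G` in `C/X`. -/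
def overG (Gr : InternalGroup C) (X : C) : Over X := Over.mk (prod.snd : Gr.G ⨯ X ⟶ X)

section OverGroup

variable {Gr : InternalGroup C} {X : C}

/-- The `G`-component of a morphism into `G ⨯ X` over `X`. -/
abbrev toG {A : Over X} (u : A ⟶ overG Gr X) : A.left ⟶ Gr.G := u.left ≫ prod.fst

theorem homGX_ext {A : Over X} {u v : A ⟶ overG Gr X} (h : toG u = toG v) : u = v := by
  ext
  apply Limits.prod.hom_ext
  · exact h
  · have hu := Over.w u
    have hv := Over.w v
    dsimp [overG] at hu hv
    rw [hu, hv]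

theorem toG_comp {A B : Over X} (w : A ⟶ B) (u : B ⟶ overG Gr X) :
    toG (w ≫ u) = w.left ≫ toG u := by
  dsimp [toG]
  exact Category.assoc _ _ _

variable (Gr X)

/-- The multiplication `m ⨯ id_X : (G ⨯ G) ⨯ X ⟶ G ⨯ X` of the induced group in `C/X`,
viewing `(G ⨯ X) ⨯_X (G ⨯ X) ≅ (G ⨯ G) ⨯ X`. -/
def overMul : overG Gr X ⨯ overG Gr X ⟶ overG Gr X :=
  Over.homMk
    (prod.lift
      (prod.lift (toG (prod.fst : overG Gr X ⨯ overG Gr X ⟶ overG Gr X))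
        (toG (prod.snd : overG Gr X ⨯ overG Gr X ⟶ overG Gr X)) ≫ Gr.m)
      (overG Gr X ⨯ overG Gr X).hom)
    (by simp [overG])

/-- The unit `(e ∘ !, id_X) : X ⟶ G ⨯ X` of the induced group in `C/X`. -/
def overOne : ⊤_ (Over X) ⟶ overG Gr X :=
  Over.homMk (prod.lift (terminal.from (⊤_ Over X).left ≫ Gr.e) (⊤_ Over X).hom)
    (by simp [overG])

/-- The inverse `i ⨯ id_X : G ⨯ X ⟶ G ⨯ X` of the induced group in `C/X`. -/
def overInv : overG Gr X ⟶ overG Gr X :=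
  Over.homMk (prod.map Gr.i (𝟙 X)) (by simp [overG])

variable {Gr X}

theorem toG_overMul {A : Over X} (u : A ⟶ overG Gr X ⨯ overG Gr X) :
    toG (u ≫ overMul Gr X)
      = prod.lift (toG (u ≫ prod.fst)) (toG (u ≫ prod.snd)) ≫ Gr.m := by
  rw [toG_comp]
  dsimp [overMul, toG]
  erw [prod.lift_fst, prod.comp_lift_assoc]
  erw [Category.assoc, Category.assoc]

theorem toG_overOne {A : Over X} (u : A ⟶ ⊤_ (Over X)) :
    toG (u ≫ overOne Gr X) = terminal.from A.left ≫ Gr.e := by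
  rw [toG_comp]
  dsimp [overOne, toG]
  erw [prod.lift_fst, ← Category.assoc, terminal.comp_from]

end OverGroup

/-- The internal group `G ⨯ X` in the slice category `C/X` induced by an internal group `G`
of `C`: its multiplication is induced by `m ⨯ id_X`, its unit by `(e ∘ !, id_X)` and its
inverse by `i ⨯ id_X`. -/
def inducedGroup (Gr : InternalGroup C) (X : C) : InternalGroup (Over X) where
  G := overG Gr X
  m := overMul Gr X
  e := overOne Gr X
  i := overInv Gr X
  one_mul' := by
    apply homGX_ext
    rw [toG_overMul, prod.lift_fst, prod.lift_snd, toG_overOne]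
    simp only [toG, Over.id_left, Category.id_comp]
    erw [Category.id_comp]
    exact Gr.one_mul_elt (prod.fst : Gr.G ⨯ X ⟶ Gr.G)
  mul_one' := by
    apply homGX_ext
    rw [toG_overMul, prod.lift_fst, prod.lift_snd, toG_overOne]
    simp only [toG, Over.id_left, Category.id_comp]
    erw [Category.id_comp]
    exact Gr.mul_one_elt (prod.fst : Gr.G ⨯ X ⟶ Gr.G)
  mul_assoc' := by
    apply homGX_ext
    have l1 : ((prod.associator (overG Gr X) (overG Gr X) (overG Gr X)).inv ≫
          prod.map (overMul Gr X) (𝟙 (overG Gr X))) ≫ prod.fst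
        = prod.lift prod.fst (prod.snd ≫ prod.fst) ≫ overMul Gr X := by
      rw [Category.assoc, prod.map_fst, ← Category.assoc]
      congr 1
      simp
    have l2 : ((prod.associator (overG Gr X) (overG Gr X) (overG Gr X)).inv ≫
          prod.map (overMul Gr X) (𝟙 (overG Gr X))) ≫ prod.snd
        = prod.snd ≫ prod.snd := by
      rw [Category.assoc, prod.map_snd, Category.comp_id]
      simp
    have l3 : prod.map (𝟙 (overG Gr X)) (overMul Gr X) ≫
          (prod.fst : overG Gr X ⨯ overG Gr X ⟶ overG Gr X) = prod.fst := by
      rw [prod.map_fst, Category.comp_id]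
    have l4 : prod.map (𝟙 (overG Gr X)) (overMul Gr X) ≫
          (prod.snd : overG Gr X ⨯ overG Gr X ⟶ overG Gr X)
        = prod.snd ≫ overMul Gr X := by
      rw [prod.map_snd]
    rw [← Category.assoc, toG_overMul, l1, l2, toG_overMul, prod.lift_fst, prod.lift_snd]
    rw [toG_overMul, l3, l4, toG_overMul]
    exact Gr.mul_assoc_elt _ _ _
  inv_mul' := by
    apply homGX_ext
    rw [toG_overMul, prod.lift_fst, prod.lift_snd, toG_overOne]
    have hi : toG (overInv Gr X) = prod.fst ≫ Gr.i := by
      dsimp [overInv, toG]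
      exact prod.map_fst _ _
    rw [hi]
    simp only [toG, Over.id_left, Category.id_comp]
    erw [Category.id_comp]
    exact Gr.inv_mul_elt (prod.fst : Gr.G ⨯ X ⟶ Gr.G)
  mul_inv' := by
    apply homGX_ext
    rw [toG_overMul, prod.lift_fst, prod.lift_snd, toG_overOne]
    have hi : toG (overInv Gr X) = prod.fst ≫ Gr.i := by
      dsimp [overInv, toG]
      exact prod.map_fst _ _
    rw [hi]
    simp only [toG, Over.id_left, Category.id_comp]
    erw [Category.id_comp]
    exact Gr.mul_inv_elt (prod.fst : Gr.G ⨯ X ⟶ Gr.G)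

/-- A principal `G`-bundle over an object `X` of `C`: a `G`-object `(P, p)` with an
action-invariant morphism `f : P ⟶ X` which is an effective descent morphism and such that
`(p, π₂) : G ⨯ P ⟶ P ⨯_X P` is an isomorphism. -/
structure PrincipalBundleOver (Gr : InternalGroup C) (X : C) where
  P : InternalGroup.GObject Gr
  f : P.A ⟶ X
  invariant : InternalGroup.act P ≫ f = prod.snd ≫ f
  descent : EffectiveDescentMorphism f
  torsor : IsIso (pullback.lift (InternalGroup.act P) prod.snd invariant)

namespace PrincipalBundleOver

variable {Gr : InternalGroup C} {X : C}

/-- A morphism of principal `G`-bundles over `X`: a `G`-homomorphism over `X`. -/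
@[ext]
structure Hom (P Q : PrincipalBundleOver Gr X) where
  hom : P.P ⟶ Q.P
  w : hom.f ≫ Q.f = P.f

/-- The category of principal `G`-bundles over `X`. -/
instance : Category (PrincipalBundleOver Gr X) where
  Hom P Q := Hom P Q
  id P := ⟨𝟙 P.P, by rw [Monad.Algebra.id_f]; simp⟩
  comp u v := ⟨u.hom ≫ v.hom, by rw [Monad.Algebra.comp_f, Category.assoc, v.w, u.w]⟩
  id_comp u := by apply Hom.ext; simp
  comp_id u := by apply Hom.ext; simp
  assoc u v w := by apply Hom.ext; simp

end PrincipalBundleOver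

/-- The category of adjunctions `L ⊣ R : C ⇄ [G, C]` over `C` (i.e. `Σ_G ∘ L ≅ Id_C`)
satisfying Frobenius reciprocity; morphisms are natural transformations between the left
adjoints. -/
structure FrobAdjObj (Gr : InternalGroup C) (SG : InternalGroup.GObject Gr ⥤ C) where
  L : C ⥤ InternalGroup.GObject Gr
  R : InternalGroup.GObject Gr ⥤ C
  adj : L ⊣ R
  isOver : Nonempty (L ⋙ SG ≅ 𝟭 C)
  frob : IsFrobenius adj

/-- A morphism of adjunctions over `C`: a natural transformation between the left adjoints. -/
@[ext]
structure FrobAdjHom {Gr : InternalGroup C} {SG : InternalGroup.GObject Gr ⥤ C}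
    (A B : FrobAdjObj Gr SG) where
  nat : A.L ⟶ B.L

instance (Gr : InternalGroup C) (SG : InternalGroup.GObject Gr ⥤ C) :
    Category (FrobAdjObj Gr SG) where
  Hom A B := FrobAdjHom A B
  id A := ⟨𝟙 A.L⟩
  comp u v := ⟨u.nat ≫ v.nat⟩
  id_comp u := by apply FrobAdjHom.ext; simp
  comp_id u := by apply FrobAdjHom.ext; simp
  assoc u v w := by apply FrobAdjHom.ext; simp

/-- The category of adjunctions `L ⊣ R : C/X ⇄ [G, C]` over `C` (i.e. `Σ_G ∘ L ≅ Σ_X`)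
that are stably Frobenius; morphisms are natural transformations between the left adjoints. -/
structure StablyFrobAdjOver (Gr : InternalGroup C) (SG : InternalGroup.GObject Gr ⥤ C)
    (X : C) where
  L : Over X ⥤ InternalGroup.GObject Gr
  R : InternalGroup.GObject Gr ⥤ Over X
  adj : L ⊣ R
  isOver : Nonempty (L ⋙ SG ≅ Over.forget X)
  frob : IsStablyFrobenius adj

/-- A morphism of adjunctions over `C`: a natural transformation between the left adjoints. -/
@[ext]
structure StablyFrobAdjHom {Gr : InternalGroup C} {SG : InternalGroup.GObject Gr ⥤ C} {X : C}
    (A B : StablyFrobAdjOver Gr SG X) where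
  nat : A.L ⟶ B.L

instance (Gr : InternalGroup C) (SG : InternalGroup.GObject Gr ⥤ C) (X : C) :
    Category (StablyFrobAdjOver Gr SG X) where
  Hom A B := StablyFrobAdjHom A B
  id A := ⟨𝟙 A.L⟩
  comp u v := ⟨u.nat ≫ v.nat⟩
  id_comp u := by apply StablyFrobAdjHom.ext; simp
  comp_id u := by apply StablyFrobAdjHom.ext; simp
  assoc u v w := by apply StablyFrobAdjHom.ext; simp

end PrincipalBundles

open PrincipalBundles PrincipalBundles.InternalGroup
open CategoryTheory CategoryTheory.Limits

namespace Statement15Aux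

attribute [local simp] prod.lift_fst prod.lift_snd prod.lift_fst_assoc prod.lift_snd_assoc

section Ext

variable {D : Type u₂} [Category.{v₂} D]

theorem over_obj_ext {Z : D} {A B : Over Z}
    (h1 : A.left = B.left) (h2 : HEq A.hom B.hom) : A = B := by
  obtain ⟨la, ⟨⟨⟩⟩, fa⟩ := A
  obtain ⟨lb, ⟨⟨⟩⟩, fb⟩ := B
  subst h1
  cases eq_of_heq h2
  rfl

theorem alg_obj_ext {T : Monad D} {A B : T.Algebra}
    (h1 : A.A = B.A) (h2 : HEq A.a B.a) : A = B := by
  obtain ⟨Aa, aa, _, _⟩ := A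
  obtain ⟨Ba, ba, _, _⟩ := B
  dsimp at h1
  subst h1
  cases eq_of_heq h2
  rfl

theorem alg_hom_heq {T : Monad D} {A A' B : T.Algebra}
    (e : A = A') (u : A ⟶ B) (u' : A' ⟶ B) (h : HEq u.f u'.f) : HEq u u' := by
  subst e
  exact heq_of_eq (Monad.Algebra.Hom.ext (eq_of_heq h))

theorem eqToHom_alg_f {T : Monad D} {A B : T.Algebra} (h : A = B) :
    (eqToHom h).f = eqToHom (congrArg Monad.Algebra.A h) := by
  subst h; rfl

theorem eqToHom_over_left {Z : D} {A B : Over Z} (h : A = B) :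
    (eqToHom h).left = eqToHom (congrArg Comma.left h) := by
  subst h; rfl

end Ext

variable {C : Type u} [Category.{v} C] [HasFiniteLimits C]

section Core

variable {Gr : InternalGroup C} {X : C}

/-- Pairing into `overG Gr X ⨯ Z` from a `G`-component and a `Z`-component. -/
def pairG {Z T : Over X} (g : T.left ⟶ Gr.G) (z : T ⟶ Z) : T ⟶ overG Gr X ⨯ Z :=
  prod.lift (Over.homMk (prod.lift g T.hom) (prod.lift_snd _ _)) z

theorem pairG_fst {Z T : Over X} (g : T.left ⟶ Gr.G) (z : T ⟶ Z) :
    pairG g z ≫ prod.fst = Over.homMk (prod.lift g T.hom) (prod.lift_snd _ _) :=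
  prod.lift_fst _ _

theorem pairG_snd {Z T : Over X} (g : T.left ⟶ Gr.G) (z : T ⟶ Z) :
    pairG g z ≫ prod.snd = z :=
  prod.lift_snd _ _

theorem toG_mk {T : Over X} (g : T.left ⟶ Gr.G) (h) :
    toG (Over.homMk (prod.lift g T.hom) h : T ⟶ overG Gr X) = g :=
  prod.lift_fst _ _

theorem toG_pairG {Z T : Over X} (g : T.left ⟶ Gr.G) (z : T ⟶ Z) :
    toG (pairG g z ≫ prod.fst) = g := by
  erw [pairG_fst, toG_mk]

theorem pairG_natural {Z S T : Over X} (w : S ⟶ T) (g : T.left ⟶ Gr.G) (z : T ⟶ Z) :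
    w ≫ pairG g z = pairG (w.left ≫ g) (w ≫ z) := by
  apply Limits.prod.hom_ext
  · rw [Category.assoc, pairG_fst, pairG_fst]
    apply homGX_ext
    erw [toG_comp, toG_mk, toG_mk]
  · rw [Category.assoc, pairG_snd, pairG_snd]

theorem pairG_ext {Z T : Over X} {u v : T ⟶ overG Gr X ⨯ Z}
    (h1 : toG (u ≫ prod.fst) = toG (v ≫ prod.fst)) (h2 : u ≫ prod.snd = v ≫ prod.snd) :
    u = v :=
  Limits.prod.hom_ext (homGX_ext h1) h2

end Core

variable (Gr : InternalGroup C) (X : C)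

/-- The monad on `C/X` whose algebras are the `(G ⨯ X)`-objects. -/
abbrev M := actionMonad (inducedGroup Gr X)

/-- The unit of the monad `M Gr X`, with its canonical type. -/
def etaA (A : Over X) : A ⟶ overG Gr X ⨯ A := (M Gr X).η.app A

/-- The multiplication of the monad `M Gr X`, with its canonical type. -/
def muA (A : Over X) : overG Gr X ⨯ (overG Gr X ⨯ A) ⟶ overG Gr X ⨯ A := (M Gr X).μ.app A

/-- The functor part of the monad `M Gr X`, with its canonical type. -/
def mapA {A B : Over X} (h : A ⟶ B) : overG Gr X ⨯ A ⟶ overG Gr X ⨯ B := (M Gr X).map h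

theorem alg_unit (B : (M Gr X).Algebra) : etaA Gr X B.A ≫ B.a = 𝟙 B.A := B.unit

theorem alg_assoc (B : (M Gr X).Algebra) :
    muA Gr X B.A ≫ B.a = mapA Gr X B.a ≫ B.a := B.assoc

theorem alg_hom_h {B B' : (M Gr X).Algebra} (φ : B ⟶ B') :
    mapA Gr X φ.f ≫ B'.a = B.a ≫ φ.f := φ.h

theorem Meta_fst (A : Over X) :
    toG (etaA Gr X A ≫ prod.fst) = terminal.from A.left ≫ Gr.e := by
  have h : etaA Gr X A ≫ prod.fst = terminal.from A ≫ overOne Gr X := by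
    dsimp only [etaA, M, actionMonad, inducedGroup]
    erw [prod.lift_fst]
  rw [h, toG_overOne]

theorem Meta_snd (A : Over X) : etaA Gr X A ≫ prod.snd = 𝟙 A := by
  dsimp only [etaA, M, actionMonad, inducedGroup]
  erw [prod.lift_snd]

theorem Mmu_fst (A : Over X) :
    muA Gr X A ≫ prod.fst
      = prod.lift prod.fst (prod.snd ≫ prod.fst) ≫ overMul Gr X := by
  dsimp only [muA, M, actionMonad, inducedGroup]
  erw [Category.assoc, prod.map_fst, prod.associator_inv, prod.lift_fst_assoc]

theorem Mmu_snd (A : Over X) : muA Gr X A ≫ prod.snd = prod.snd ≫ prod.snd := by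
  dsimp only [muA, M, actionMonad, inducedGroup]
  simp
  erw [Category.assoc, prod.map_snd, Category.comp_id, prod.lift_snd]

theorem toG_Mmu_fst₀ (A : Over X) :
    toG (muA Gr X A ≫ prod.fst)
      = prod.lift (toG (prod.fst : overG Gr X ⨯ (overG Gr X ⨯ A) ⟶ overG Gr X))
          (toG ((prod.snd : overG Gr X ⨯ (overG Gr X ⨯ A) ⟶ overG Gr X ⨯ A) ≫ prod.fst))
          ≫ Gr.m := by
  rw [Mmu_fst, toG_overMul, prod.lift_fst, prod.lift_snd]

theorem toG_Mmu_fst (A : Over X) {T : Over X} (u : T ⟶ overG Gr X ⨯ (overG Gr X ⨯ A)) :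
    toG ((u ≫ muA Gr X A) ≫ prod.fst)
      = prod.lift (toG (u ≫ prod.fst)) (toG ((u ≫ prod.snd) ≫ prod.fst)) ≫ Gr.m := by
  rw [Category.assoc, Mmu_fst, ← Category.assoc, toG_overMul]
  rw [Category.assoc, prod.lift_fst, Category.assoc, prod.lift_snd, ← Category.assoc]

theorem Mmap_fst {A B : Over X} (h : A ⟶ B) :
    mapA Gr X h ≫ (prod.fst : overG Gr X ⨯ B ⟶ overG Gr X) = prod.fst := by
  dsimp only [mapA, M, actionMonad, prod.functor, inducedGroup]
  rw [prod.map_fst, Category.comp_id]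

theorem Mmap_snd {A B : Over X} (h : A ⟶ B) :
    mapA Gr X h ≫ (prod.snd : overG Gr X ⨯ B ⟶ B) = prod.snd ≫ h := by
  dsimp only [mapA, M, actionMonad, prod.functor, inducedGroup]
  rw [prod.map_snd]

theorem Mmap_eq {A B : Over X} (h : A ⟶ B) :
    mapA Gr X h = prod.map (𝟙 (overG Gr X)) h := by
  dsimp only [mapA, M, actionMonad, prod.functor, inducedGroup]

/-- The object `G ⨯ A.left ⟶ X` of `C/X` corresponding to `overG ⨯ A`. -/
def TB (A : Over X) : Over X := Over.mk (prod.snd ≫ A.hom : Gr.G ⨯ A.left ⟶ X)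

def vB (A : Over X) : TB Gr X A ⟶ A := Over.homMk prod.snd rfl

/-- The comparison `TB Gr X A ⟶ overG Gr X ⨯ A`. -/
def sigmaB (A : Over X) : TB Gr X A ⟶ overG Gr X ⨯ A := pairG prod.fst (vB Gr X A)

theorem toG_sigmaB_fst₀ (A : Over X) : toG (sigmaB Gr X A ≫ prod.fst) = prod.fst := by
  erw [sigmaB, toG_pairG]

theorem sigmaB_snd (A : Over X) : sigmaB Gr X A ≫ prod.snd = vB Gr X A := by
  erw [sigmaB, pairG_snd]

theorem toG_sigmaB_fst (A : Over X) {T : Over X} (w : T ⟶ TB Gr X A) :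
    toG ((w ≫ sigmaB Gr X A) ≫ prod.fst) = w.left ≫ prod.fst := by
  rw [Category.assoc, toG_comp, toG_sigmaB_fst₀]

/-- The action of a `(G ⨯ X)`-object, as a morphism in `C`. -/
def actF (B : (M Gr X).Algebra) : Gr.G ⨯ B.A.left ⟶ B.A.left := (sigmaB Gr X B.A ≫ B.a).left

theorem actF_w (B : (M Gr X).Algebra) : actF Gr X B ≫ B.A.hom = prod.snd ≫ B.A.hom :=
  Over.w (sigmaB Gr X B.A ≫ B.a)

theorem comp_actF (B : (M Gr X).Algebra) {T : Over X} (w : T ⟶ TB Gr X B.A) :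
    w.left ≫ actF Gr X B = ((w ≫ sigmaB Gr X B.A) ≫ B.a).left := by
  erw [Category.assoc, Over.comp_left, actF]

def etaTB (B : (M Gr X).Algebra) : B.A ⟶ TB Gr X B.A :=
  Over.homMk (prod.lift (terminal.from B.A.left ≫ Gr.e) (𝟙 B.A.left)) (by
    show prod.lift (terminal.from B.A.left ≫ Gr.e) (𝟙 B.A.left) ≫ prod.snd ≫ B.A.hom
        = B.A.hom
    rw [prod.lift_snd_assoc, Category.id_comp])

theorem etaTB_sigmaB (B : (M Gr X).Algebra) :
    etaTB Gr X B ≫ sigmaB Gr X B.A = etaA Gr X B.A := by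
  apply pairG_ext
  · rw [toG_sigmaB_fst, Meta_fst]
    show prod.lift (terminal.from B.A.left ≫ Gr.e) (𝟙 B.A.left) ≫ prod.fst
        = terminal.from B.A.left ≫ Gr.e
    rw [prod.lift_fst]
  · rw [Category.assoc, sigmaB_snd, Meta_snd]
    apply Over.OverMorphism.ext
    show prod.lift (terminal.from B.A.left ≫ Gr.e) (𝟙 B.A.left) ≫ prod.snd = 𝟙 B.A.left
    rw [prod.lift_snd]

theorem actF_unit (B : (M Gr X).Algebra) :
    prod.lift (terminal.from B.A.left ≫ Gr.e) (𝟙 B.A.left) ≫ actF Gr X B = 𝟙 B.A.left := by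
  have h := comp_actF Gr X B (etaTB Gr X B)
  rw [etaTB_sigmaB, alg_unit] at h
  exact h

def T2B (A : Over X) : Over X :=
  Over.mk (prod.snd ≫ prod.snd ≫ A.hom : Gr.G ⨯ (Gr.G ⨯ A.left) ⟶ X)

def w1B (B : (M Gr X).Algebra) : T2B Gr X B.A ⟶ TB Gr X B.A :=
  Over.homMk (prod.map (𝟙 Gr.G) (actF Gr X B)) (by
    show prod.map (𝟙 Gr.G) (actF Gr X B) ≫ prod.snd ≫ B.A.hom
        = prod.snd ≫ prod.snd ≫ B.A.hom
    rw [prod.map_snd_assoc, actF_w])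

def w2B (A : Over X) : T2B Gr X A ⟶ TB Gr X A :=
  Over.homMk ((prod.associator Gr.G Gr.G A.left).inv ≫ prod.map Gr.m (𝟙 A.left)) (by
    show ((prod.associator Gr.G Gr.G A.left).inv ≫ prod.map Gr.m (𝟙 A.left)) ≫
        prod.snd ≫ A.hom = prod.snd ≫ prod.snd ≫ A.hom
    simp)

def w3B (A : Over X) : T2B Gr X A ⟶ TB Gr X A := Over.homMk prod.snd rfl

def sigma2 (B : (M Gr X).Algebra) : T2B Gr X B.A ⟶ overG Gr X ⨯ (overG Gr X ⨯ B.A) :=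
  pairG prod.fst (w3B Gr X B.A ≫ sigmaB Gr X B.A)

theorem sigma2_fst (B : (M Gr X).Algebra) : toG (sigma2 Gr X B ≫ prod.fst) = prod.fst := by
  erw [sigma2, toG_pairG]

theorem sigma2_snd (B : (M Gr X).Algebra) :
    sigma2 Gr X B ≫ prod.snd = w3B Gr X B.A ≫ sigmaB Gr X B.A := by
  erw [sigma2, pairG_snd]

theorem sigma2_map (B : (M Gr X).Algebra) :
    sigma2 Gr X B ≫ mapA Gr X B.a = w1B Gr X B ≫ sigmaB Gr X B.A := by
  apply pairG_ext
  · erw [toG_sigmaB_fst, Category.assoc, Mmap_fst, sigma2_fst]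
    show prod.fst = prod.map (𝟙 Gr.G) (actF Gr X B) ≫ prod.fst
    rw [prod.map_fst, Category.comp_id]
  · erw [Category.assoc (w1B Gr X B) (sigmaB Gr X B.A) prod.snd, sigmaB_snd,
      Category.assoc (sigma2 Gr X B) (mapA Gr X B.a) prod.snd, Mmap_snd,
      ← Category.assoc (sigma2 Gr X B) prod.snd B.a, sigma2_snd]
    apply Over.OverMorphism.ext
    rw [← comp_actF, Over.comp_left]
    show prod.snd ≫ actF Gr X B = prod.map (𝟙 Gr.G) (actF Gr X B) ≫ prod.snd
    rw [prod.map_snd]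

theorem sigma2_mu (B : (M Gr X).Algebra) :
    sigma2 Gr X B ≫ muA Gr X B.A = w2B Gr X B.A ≫ sigmaB Gr X B.A := by
  apply pairG_ext
  · rw [toG_sigmaB_fst, toG_Mmu_fst, sigma2_fst, sigma2_snd, toG_sigmaB_fst]
    show prod.lift prod.fst (prod.snd ≫ prod.fst) ≫ Gr.m
        = ((prod.associator Gr.G Gr.G B.A.left).inv ≫ prod.map Gr.m (𝟙 B.A.left)) ≫
            prod.fst
    rw [Category.assoc, prod.map_fst, prod.associator_inv, prod.lift_fst_assoc]
  · erw [Category.assoc (w2B Gr X B.A) (sigmaB Gr X B.A) prod.snd, sigmaB_snd,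
      Category.assoc (sigma2 Gr X B) (muA Gr X B.A) prod.snd, Mmu_snd,
      ← Category.assoc (sigma2 Gr X B) prod.snd prod.snd, sigma2_snd,
      Category.assoc (w3B Gr X B.A) (sigmaB Gr X B.A) prod.snd, sigmaB_snd]
    apply Over.OverMorphism.ext
    rw [Over.comp_left, Over.comp_left]
    show prod.snd ≫ prod.snd
        = ((prod.associator Gr.G Gr.G B.A.left).inv ≫ prod.map Gr.m (𝟙 B.A.left)) ≫
            prod.snd
    simp

theorem actF_assoc (B : (M Gr X).Algebra) :
    ((prod.associator Gr.G Gr.G B.A.left).inv ≫ prod.map Gr.m (𝟙 B.A.left)) ≫ actF Gr X B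
      = prod.map (𝟙 Gr.G) (actF Gr X B) ≫ actF Gr X B := by
  have h1 : (w2B Gr X B.A).left ≫ actF Gr X B = (w1B Gr X B).left ≫ actF Gr X B := by
    erw [comp_actF, comp_actF, ← sigma2_map, ← sigma2_mu]
    exact congrArg Over.Hom.left ((Category.assoc _ _ _).trans
      ((congrArg (sigma2 Gr X B ≫ ·) (alg_assoc Gr X B)).trans (Category.assoc _ _ _).symm))
  exact h1

/-- The `G`-object in `C` underlying a `(G ⨯ X)`-object in `C/X`. -/
def FG (B : (M Gr X).Algebra) : GObject Gr where
  A := B.A.left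
  a := actF Gr X B
  unit := actF_unit Gr X B
  assoc := actF_assoc Gr X B

def FHom (B : (M Gr X).Algebra) : FG Gr X B ⟶ (trivAction Gr).obj X where
  f := B.A.hom
  h := by
    show prod.map (𝟙 Gr.G) B.A.hom ≫ prod.snd = actF Gr X B ≫ B.A.hom
    rw [prod.map_snd, actF_w]

def wphi {B B' : (M Gr X).Algebra} (φ : B ⟶ B') : TB Gr X B.A ⟶ TB Gr X B'.A :=
  Over.homMk (prod.map (𝟙 Gr.G) φ.f.left) (by
    show prod.map (𝟙 Gr.G) φ.f.left ≫ prod.snd ≫ B'.A.hom = prod.snd ≫ B.A.hom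
    rw [prod.map_snd_assoc, Over.w φ.f])

theorem actF_natural {B B' : (M Gr X).Algebra} (φ : B ⟶ B') :
    prod.map (𝟙 Gr.G) φ.f.left ≫ actF Gr X B' = actF Gr X B ≫ φ.f.left := by
  have h1 : wphi Gr X φ ≫ sigmaB Gr X B'.A = sigmaB Gr X B.A ≫ mapA Gr X φ.f := by
    apply pairG_ext
    · rw [toG_sigmaB_fst, Category.assoc, Mmap_fst, toG_sigmaB_fst₀]
      show prod.map (𝟙 Gr.G) φ.f.left ≫ prod.fst = prod.fst
      rw [prod.map_fst, Category.comp_id]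
    · rw [Category.assoc (wphi Gr X φ) (sigmaB Gr X B'.A) prod.snd, sigmaB_snd,
        Category.assoc (sigmaB Gr X B.A) (mapA Gr X φ.f) prod.snd, Mmap_snd,
        ← Category.assoc (sigmaB Gr X B.A) prod.snd φ.f, sigmaB_snd]
      apply Over.OverMorphism.ext
      rw [Over.comp_left, Over.comp_left]
      show prod.map (𝟙 Gr.G) φ.f.left ≫ prod.snd = prod.snd ≫ φ.f.left
      rw [prod.map_snd]
  have h2 := comp_actF Gr X B' (wphi Gr X φ)
  erw [h1] at h2
  exact h2.trans (congrArg Over.Hom.left ((Category.assoc _ _ _).trans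
    ((congrArg (sigmaB Gr X B.A ≫ ·) (alg_hom_h Gr X φ)).trans (Category.assoc _ _ _).symm)))

def FGmap {B B' : (M Gr X).Algebra} (φ : B ⟶ B') : FG Gr X B ⟶ FG Gr X B' where
  f := φ.f.left
  h := actF_natural Gr X φ

/-- The functor `[G ⨯ X, C/X] ⥤ [G, C]/G*(X)`. -/
def Ffun : (M Gr X).Algebra ⥤ Over ((trivAction Gr).obj X) where
  obj B := Over.mk (FHom Gr X B)
  map {B B'} φ := Over.homMk (FGmap Gr X φ) (by
    apply Monad.Algebra.Hom.ext
    show φ.f.left ≫ B'.A.hom = B.A.hom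
    exact Over.w φ.f)
  map_id B := by
    apply Over.OverMorphism.ext
    apply Monad.Algebra.Hom.ext
    rfl
  map_comp φ ψ := by
    apply Over.OverMorphism.ext
    apply Monad.Algebra.Hom.ext
    rfl

/-- The object of `C/X` underlying a `G`-object over `G*(X)`. -/
def HA (Y : Over ((trivAction Gr).obj X)) : Over X := Over.mk Y.hom.f

theorem Y_invariant (Y : Over ((trivAction Gr).obj X)) :
    Y.left.a ≫ Y.hom.f = prod.snd ≫ Y.hom.f := by
  have h : prod.map (𝟙 Gr.G) Y.hom.f ≫ prod.snd = Y.left.a ≫ Y.hom.f := Y.hom.h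
  rw [← h, prod.map_snd]

/-- The induced `(G ⨯ X)`-action in `C/X`. -/
def actH (Y : Over ((trivAction Gr).obj X)) : overG Gr X ⨯ HA Gr X Y ⟶ HA Gr X Y :=
  Over.homMk
    (prod.lift (toG (prod.fst : overG Gr X ⨯ HA Gr X Y ⟶ overG Gr X))
        ((prod.snd : overG Gr X ⨯ HA Gr X Y ⟶ HA Gr X Y).left) ≫ Y.left.a)
    (by
      show (prod.lift (toG (prod.fst : overG Gr X ⨯ HA Gr X Y ⟶ overG Gr X))
          ((prod.snd : overG Gr X ⨯ HA Gr X Y ⟶ HA Gr X Y).left) ≫ Y.left.a) ≫ Y.hom.f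
          = (overG Gr X ⨯ HA Gr X Y).hom
      erw [Category.assoc, Y_invariant, ← Category.assoc, prod.lift_snd]
      exact Over.w (prod.snd : overG Gr X ⨯ HA Gr X Y ⟶ HA Gr X Y))

theorem comp_actH (Y : Over ((trivAction Gr).obj X)) {T : Over X}
    (u : T ⟶ overG Gr X ⨯ HA Gr X Y) :
    (u ≫ actH Gr X Y).left
      = prod.lift (toG (u ≫ prod.fst)) ((u ≫ prod.snd).left) ≫ Y.left.a := by
  rw [Over.comp_left]
  show u.left ≫ prod.lift (toG (prod.fst : overG Gr X ⨯ HA Gr X Y ⟶ overG Gr X))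
      ((prod.snd : overG Gr X ⨯ HA Gr X Y ⟶ HA Gr X Y).left) ≫ Y.left.a = _
  erw [← Category.assoc, prod.comp_lift, toG_comp, ← Over.comp_left]

/-- The `(G ⨯ X)`-object corresponding to a `G`-object over `G*(X)`. -/
def HAlg (Y : Over ((trivAction Gr).obj X)) : (M Gr X).Algebra where
  A := HA Gr X Y
  a := actH Gr X Y
  unit := by
    show etaA Gr X (HA Gr X Y) ≫ actH Gr X Y = 𝟙 (HA Gr X Y)
    apply Over.OverMorphism.ext
    rw [comp_actH, Meta_fst, Meta_snd]
    show prod.lift (terminal.from Y.left.A ≫ Gr.e) (𝟙 Y.left.A) ≫ Y.left.a = 𝟙 Y.left.A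
    exact act_one_elt Y.left (𝟙 Y.left.A)
  assoc := by
    show muA Gr X (HA Gr X Y) ≫ actH Gr X Y = mapA Gr X (actH Gr X Y) ≫ actH Gr X Y
    apply Over.OverMorphism.ext
    rw [comp_actH, comp_actH, toG_Mmu_fst₀, Mmu_snd, Mmap_fst, Mmap_snd,
      Over.comp_left, comp_actH]
    exact act_assoc_elt Y.left
      (toG (prod.fst : overG Gr X ⨯ (overG Gr X ⨯ HA Gr X Y) ⟶ overG Gr X))
      (toG ((prod.snd : overG Gr X ⨯ (overG Gr X ⨯ HA Gr X Y) ⟶ overG Gr X ⨯ HA Gr X Y) ≫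
        prod.fst))
      (((prod.snd : overG Gr X ⨯ (overG Gr X ⨯ HA Gr X Y) ⟶ overG Gr X ⨯ HA Gr X Y) ≫
        prod.snd).left)

def HHom {Y Y' : Over ((trivAction Gr).obj X)} (ψ : Y ⟶ Y') :
    HAlg Gr X Y ⟶ HAlg Gr X Y' where
  f := Over.homMk ψ.left.f (by
    show ψ.left.f ≫ Y'.hom.f = Y.hom.f
    exact congrArg Monad.Algebra.Hom.f (Over.w ψ))
  h := by
    show mapA Gr X (Over.homMk ψ.left.f
        (show ψ.left.f ≫ Y'.hom.f = Y.hom.f from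
          congrArg Monad.Algebra.Hom.f (Over.w ψ)) : HA Gr X Y ⟶ HA Gr X Y')
        ≫ actH Gr X Y' = actH Gr X Y ≫ (Over.homMk ψ.left.f
        (show ψ.left.f ≫ Y'.hom.f = Y.hom.f from
          congrArg Monad.Algebra.Hom.f (Over.w ψ)) : HA Gr X Y ⟶ HA Gr X Y')
    apply Over.OverMorphism.ext
    rw [comp_actH, Mmap_fst, Mmap_snd, Over.comp_left]
    have hψ : prod.map (𝟙 Gr.G) ψ.left.f ≫ Y'.left.a = Y.left.a ≫ ψ.left.f := ψ.left.h
    show prod.lift (toG (prod.fst : overG Gr X ⨯ (HA Gr X Y) ⟶ overG Gr X))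
        ((prod.snd : overG Gr X ⨯ HA Gr X Y ⟶ HA Gr X Y).left ≫ ψ.left.f) ≫ Y'.left.a
        = (actH Gr X Y).left ≫ ψ.left.f
    rw [show prod.lift (toG (prod.fst : overG Gr X ⨯ (HA Gr X Y) ⟶ overG Gr X))
          ((prod.snd : overG Gr X ⨯ HA Gr X Y ⟶ HA Gr X Y).left ≫ ψ.left.f)
        = prod.lift (toG (prod.fst : overG Gr X ⨯ (HA Gr X Y) ⟶ overG Gr X))
          ((prod.snd : overG Gr X ⨯ HA Gr X Y ⟶ HA Gr X Y).left) ≫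
            prod.map (𝟙 Gr.G) ψ.left.f by
      erw [prod.lift_map, Category.comp_id]]
    erw [Category.assoc, hψ]
    exact (Category.assoc _ _ _).symm

/-- The functor `[G, C]/G*(X) ⥤ [G ⨯ X, C/X]`. -/
def Hfun : Over ((trivAction Gr).obj X) ⥤ (M Gr X).Algebra where
  obj := HAlg Gr X
  map := HHom Gr X
  map_id Y := by
    apply Monad.Algebra.Hom.ext
    apply Over.OverMorphism.ext
    rfl
  map_comp φ ψ := by
    apply Monad.Algebra.Hom.ext
    apply Over.OverMorphism.ext
    rfl

def kback (B : (M Gr X).Algebra) :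
    overG Gr X ⨯ B.A ⟶ TB Gr X B.A :=
  Over.homMk
    (prod.lift
      (toG (prod.fst : overG Gr X ⨯ B.A ⟶ overG Gr X))
      ((prod.snd : overG Gr X ⨯ B.A ⟶ B.A).left))
    (by
      show prod.lift
          (toG (prod.fst : overG Gr X ⨯ B.A ⟶ overG Gr X))
          ((prod.snd : overG Gr X ⨯ B.A ⟶ B.A).left) ≫ prod.snd ≫ B.A.hom
          = (overG Gr X ⨯ B.A).hom
      rw [prod.lift_snd_assoc]
      exact Over.w (prod.snd : overG Gr X ⨯ B.A ⟶ B.A))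

theorem kback_sigmaB (B : (M Gr X).Algebra) :
    kback Gr X B ≫ sigmaB Gr X B.A = 𝟙 (overG Gr X ⨯ B.A) := by
  apply pairG_ext
  · rw [toG_sigmaB_fst, toG_comp, Over.id_left, Category.id_comp]
    exact prod.lift_fst _ _
  · rw [Category.assoc, sigmaB_snd]
    apply Over.OverMorphism.ext
    rw [Over.comp_left, Over.comp_left, Over.id_left, Category.id_comp]
    exact prod.lift_snd _ _

theorem HF_obj (B : (M Gr X).Algebra) : HAlg Gr X (Over.mk (FHom Gr X B)) = B := by
  apply alg_obj_ext
  · rfl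
  · apply heq_of_eq
    show actH Gr X (Over.mk (FHom Gr X B)) = B.a
    apply Over.OverMorphism.ext
    have h2 := comp_actF Gr X B (kback Gr X B)
    erw [kback_sigmaB, Over.comp_left, Over.id_left, Category.id_comp] at h2
    exact h2

theorem FH_left (Y : Over ((trivAction Gr).obj X)) : FG Gr X (HAlg Gr X Y) = Y.left := by
  apply alg_obj_ext
  · rfl
  · apply heq_of_eq
    show actF Gr X (HAlg Gr X Y) = Y.left.a
    have h := comp_actH Gr X Y (sigmaB Gr X (HA Gr X Y))
    rw [toG_sigmaB_fst₀, sigmaB_snd] at h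
    show (sigmaB Gr X (HA Gr X Y) ≫ actH Gr X Y).left = Y.left.a
    rw [h]
    show prod.lift prod.fst prod.snd ≫ Y.left.a = Y.left.a
    erw [prod.lift_fst_snd, Category.id_comp]

theorem FH_obj (Y : Over ((trivAction Gr).obj X)) :
    Over.mk (FHom Gr X (HAlg Gr X Y)) = Y := by
  apply over_obj_ext
  · exact FH_left Gr X Y
  · exact alg_hom_heq (FH_left Gr X Y) _ _ (heq_of_eq rfl)

theorem comp_FH : Ffun Gr X ⋙ Hfun Gr X = 𝟭 ((M Gr X).Algebra) := by
  refine CategoryTheory.Functor.ext (fun B => HF_obj Gr X B) ?_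
  intro B B' φ
  apply Monad.Algebra.Hom.ext
  apply Over.OverMorphism.ext
  erw [Monad.Algebra.comp_f, Monad.Algebra.comp_f, eqToHom_alg_f, eqToHom_alg_f,
    Over.comp_left, Over.comp_left, eqToHom_over_left, eqToHom_over_left]
  show φ.f.left = (𝟙 B.A.left) ≫ φ.f.left ≫ (𝟙 B'.A.left)
  rw [Category.id_comp, Category.comp_id]

theorem comp_HF : Hfun Gr X ⋙ Ffun Gr X = 𝟭 (Over ((trivAction Gr).obj X)) := by
  refine CategoryTheory.Functor.ext (fun Y => FH_obj Gr X Y) ?_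
  intro Y Y' ψ
  apply Over.OverMorphism.ext
  apply Monad.Algebra.Hom.ext
  erw [Over.comp_left, Over.comp_left, eqToHom_over_left, eqToHom_over_left,
    Monad.Algebra.comp_f, Monad.Algebra.comp_f, eqToHom_alg_f, eqToHom_alg_f]
  show ψ.left.f = (𝟙 Y.left.A) ≫ ψ.left.f ≫ (𝟙 Y'.left.A)
  rw [Category.id_comp, Category.comp_id]

end Statement15Aux

/-- For an internal group `G` of `C` and an object `X`, the category
`[G ⨯ X, C/X]` of `(G ⨯ X)`-objects in `C/X` (with the induced internal group structure on
`G ⨯ X`) is isomorphic to the slice category `[G, C]/G*(X)`. -/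
theorem statement15 {C : Type u} [Category.{v} C] [HasFiniteLimits C] (Gr : InternalGroup C)
    (X : C) :
    ∃ (F : GObject (inducedGroup Gr X) ⥤ Over ((trivAction Gr).obj X))
      (H : Over ((trivAction Gr).obj X) ⥤ GObject (inducedGroup Gr X)),
      F ⋙ H = 𝟭 (GObject (inducedGroup Gr X)) ∧ H ⋙ F = 𝟭 (Over ((trivAction Gr).obj X)) := by
  exact ⟨Statement15Aux.Ffun Gr X, Statement15Aux.Hfun Gr X,
    Statement15Aux.comp_FH Gr X, Statement15Aux.comp_HF Gr X⟩
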